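/- arXiv:2601.08038 — 5 statements merged into one kernel-verified Lean document; each statement's English description precedes it below -/
import Mathlib

section
/- For integers t ≥ 1 and a, b ≥ 1, the double alternating sum ∑_{i=1}^{a} ∑_{j=1}^{b} (-1)^{i+j+1} · C(a-i+b-j, a-i) · C(t-1, i-1) · C(t-1, j-1) equals the single alternating sum ∑_{i=1}^{a} (-1)^{b+i+1} · C(t-1, i-1) · binom(t-2-a+i, b-1). -/
/-- Generalized binomial coefficient `x(x-1)⋯(x-k+1)/k!` for integer `x` and
integer `k` (zero when `k < 0`). -/
def ibinom (x k : ℤ) : ℤ :=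
  if k < 0 then 0
  else if 0 ≤ x then (x.toNat.choose k.toNat : ℤ)
  else (-1) ^ k.toNat * ((((-x) + k - 1).toNat.choose k.toNat : ℤ))

/-- Classical binomial coefficient for integer arguments: `0` when `k > n` or
when either argument is negative. -/
def C (n k : ℤ) : ℤ :=
  if 0 ≤ n ∧ 0 ≤ k then (n.toNat.choose k.toNat : ℤ) else 0

lemma ibinom_zero (x : ℤ) : ibinom x 0 = 1 := by
  unfold ibinom
  split
  · omega
  · split <;> simp

lemma ibinom_pascal (x : ℤ) (s : ℕ) :
    ibinom x ((s : ℤ) + 1) = ibinom (x - 1) ((s : ℤ) + 1) + ibinom (x - 1) (s : ℤ) := by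
  unfold ibinom
  have h1 : ¬ ((s : ℤ) + 1 < 0) := by omega
  have h2 : ¬ ((s : ℤ) < 0) := by omega
  simp only [h1, h2, if_false]
  rcases lt_trichotomy x 0 with hx | hx | hx
  · have hx1 : ¬ (0 ≤ x) := by omega
    have hx2 : ¬ (0 ≤ x - 1) := by omega
    simp only [hx1, hx2, if_false]
    obtain ⟨y, rfl⟩ : ∃ y : ℕ, x = -(y : ℤ) - 1 := ⟨(-x - 1).toNat, by omega⟩
    have e1 : (-(-(y:ℤ) - 1) + ((s:ℤ)+1) - 1).toNat = y + s + 1 := by omega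
    have e2 : (-(-(y:ℤ) - 1 - 1) + ((s:ℤ)+1) - 1).toNat = y + s + 2 := by omega
    have e3 : (-(-(y:ℤ) - 1 - 1) + (s:ℤ) - 1).toNat = y + s + 1 := by omega
    have e4 : ((s:ℤ)+1).toNat = s + 1 := by omega
    have e5 : ((s:ℤ)).toNat = s := by omega
    rw [e1, e2, e3, e4, e5]
    have : (y + s + 2).choose (s+1) = (y + s + 1).choose s + (y + s + 1).choose (s+1) :=
      Nat.choose_succ_succ (y + s + 1) s
    rw [this]
    push_cast
    ring
  · subst hx
    have hx2 : ¬ ((0:ℤ) ≤ 0 - 1) := by omega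
    simp only [le_refl, if_true, hx2, if_false]
    have e1 : ((0:ℤ)).toNat = 0 := rfl
    have e2 : ((s:ℤ)+1).toNat = s + 1 := by omega
    have e3 : ((s:ℤ)).toNat = s := by omega
    have e4 : (-((0:ℤ) - 1) + ((s:ℤ)+1) - 1).toNat = s + 1 := by omega
    have e5 : (-((0:ℤ) - 1) + (s:ℤ) - 1).toNat = s := by omega
    rw [e1, e2, e3, e4, e5]
    simp [Nat.choose_self, Nat.choose_eq_zero_of_lt (Nat.lt_succ_self s), pow_succ]
  · have hx1 : (0 ≤ x) := by omega
    have hx2 : (0 ≤ x - 1) := by omega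
    simp only [hx1, hx2, if_true]
    obtain ⟨y, rfl⟩ : ∃ y : ℕ, x = (y : ℤ) + 1 := ⟨(x - 1).toNat, by omega⟩
    have e1 : ((y:ℤ) + 1).toNat = y + 1 := by omega
    have e2 : ((y:ℤ) + 1 - 1).toNat = y := by omega
    have e3 : ((s:ℤ)+1).toNat = s + 1 := by omega
    have e4 : ((s:ℤ)).toNat = s := by omega
    rw [e1, e2, e3, e4]
    have := Nat.choose_succ_succ y s
    push_cast [this]
    ring

lemma ibinom_neg_natCast (m s : ℕ) :
    ibinom (-1 - (m : ℤ)) (s : ℤ) = (-1) ^ s * ((m + s).choose s : ℤ) := by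
  unfold ibinom
  have h1 : ¬ ((s : ℤ) < 0) := by omega
  have h2 : ¬ ((0:ℤ) ≤ -1 - m) := by omega
  simp only [h1, h2, if_false]
  have e1 : (-(-1 - (m:ℤ)) + (s:ℤ) - 1).toNat = m + s := by omega
  have e2 : ((s:ℤ)).toNat = s := by omega
  rw [e1, e2]

lemma key (n m : ℕ) : ∀ s : ℕ,
    ∑ k ∈ Finset.range (s+1), (-1:ℤ)^k * (n.choose k) * ((m+s-k).choose m)
      = (-1)^s * ibinom ((n:ℤ) - 1 - m) (s : ℤ) := by
  induction n with
  | zero =>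
    intro s
    rw [show ((0:ℕ):ℤ) - 1 - (m:ℤ) = -1 - m by push_cast; ring, ibinom_neg_natCast]
    rw [Finset.sum_eq_single 0]
    · simp only [pow_zero, one_mul, Nat.choose_zero_right, Nat.cast_one, mul_one,
        Nat.sub_zero]
      have hs : (-1:ℤ)^s * (-1:ℤ)^s = 1 := by
        rw [← pow_add, ← two_mul, pow_mul]; norm_num
      have hc : (m+s).choose m = (m+s).choose s := by
        rw [← Nat.choose_symm (Nat.le_add_left s m)]; congr 1; omega
      rw [hc, ← mul_assoc, hs, one_mul]
    · intro k _ hk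
      have : Nat.choose 0 k = 0 := by
        cases k with
        | zero => exact absurd rfl hk
        | succ k => simp
      simp [this]
    · intro h
      simp at h
  | succ n ih =>
    intro s
    cases s with
    | zero =>
      simp [ibinom_zero]
    | succ s =>
      rw [Finset.sum_range_succ']
      have hshift : ∀ k ∈ Finset.range (s+1),
          (-1:ℤ)^(k+1) * ((n+1).choose (k+1)) * ((m+(s+1)-(k+1)).choose m)
            = -((-1:ℤ)^k * (n.choose k) * ((m+s-k).choose m))
              - (-1:ℤ)^k * (n.choose (k+1)) * ((m+s-k).choose m) := by
        intro k _
        have e1 : m + (s+1) - (k+1) = m + s - k := by omega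
        rw [e1, Nat.choose_succ_succ]
        push_cast
        ring
      rw [Finset.sum_congr rfl hshift, Finset.sum_sub_distrib]
      have hB : ∑ k ∈ Finset.range (s+1), (-1:ℤ)^k * (n.choose (k+1)) * ((m+s-k).choose m)
          = ((m+s+1).choose m : ℤ)
            - (-1:ℤ)^(s+1) * ibinom ((n:ℤ) - 1 - m) ((s:ℤ)+1) := by
        have h2 := ih (s+1)
        rw [Finset.sum_range_succ'] at h2
        have e0 : ∀ k ∈ Finset.range (s+1),
            (-1:ℤ)^(k+1) * (n.choose (k+1)) * ((m+(s+1)-(k+1)).choose m)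
              = -((-1:ℤ)^k * (n.choose (k+1)) * ((m+s-k).choose m)) := by
          intro k _
          have e1 : m + (s+1) - (k+1) = m + s - k := by omega
          rw [e1]; ring
        rw [Finset.sum_congr rfl e0, Finset.sum_neg_distrib] at h2
        simp only [pow_zero, one_mul, Nat.choose_zero_right, Nat.cast_one, mul_one,
          Nat.sub_zero] at h2
        rw [show m + (s+1) = m + s + 1 from rfl] at h2
        push_cast at h2 ⊢
        linarith [h2]
      have hA : ∑ k ∈ Finset.range (s+1), -((-1:ℤ)^k * (n.choose k) * ((m+s-k).choose m))
          = -((-1:ℤ)^s * ibinom ((n:ℤ) - 1 - m) (s:ℤ)) := by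
        rw [Finset.sum_neg_distrib, ih s]
      rw [hA, hB]
      simp only [pow_zero, one_mul, Nat.choose_zero_right, Nat.cast_one, mul_one,
        Nat.sub_zero]
      have hp : ibinom ((n:ℤ) + 1 - 1 - m) ((s:ℤ)+1)
          = ibinom ((n:ℤ) - 1 - m) ((s:ℤ)+1) + ibinom ((n:ℤ) - 1 - m) (s:ℤ) := by
        have := ibinom_pascal ((n:ℤ) + 1 - 1 - m) s
        rw [show (n:ℤ) + 1 - 1 - m - 1 = (n:ℤ) - 1 - m by ring] at this
        exact this
      push_cast
      rw [hp]
      ring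

lemma C_natCast (n k : ℕ) : C (n:ℤ) (k:ℤ) = (n.choose k : ℤ) := by
  unfold C
  simp

theorem stmt3 (t a b : ℕ) (ht : 1 ≤ t) (ha : 1 ≤ a) (hb : 1 ≤ b) :
    (∑ i ∈ Finset.Icc 1 a, ∑ j ∈ Finset.Icc 1 b,
        (-1 : ℤ) ^ (i + j + 1) * C ((a : ℤ) - i + b - j) ((a : ℤ) - i) *
          C ((t : ℤ) - 1) ((i : ℤ) - 1) * C ((t : ℤ) - 1) ((j : ℤ) - 1)) =
      ∑ i ∈ Finset.Icc 1 a,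
        (-1 : ℤ) ^ (b + i + 1) * C ((t : ℤ) - 1) ((i : ℤ) - 1) *
          ibinom ((t : ℤ) - 2 - a + i) ((b : ℤ) - 1) := by
  apply Finset.sum_congr rfl
  intro i hi
  rw [Finset.mem_Icc] at hi
  obtain ⟨hi1, hi2⟩ := hi
  calc ∑ j ∈ Finset.Icc 1 b,
        (-1 : ℤ) ^ (i + j + 1) * C ((a : ℤ) - i + b - j) ((a : ℤ) - i) *
          C ((t : ℤ) - 1) ((i : ℤ) - 1) * C ((t : ℤ) - 1) ((j : ℤ) - 1)
      = ∑ k ∈ Finset.range ((b-1)+1), ((-1:ℤ)^i * C ((t : ℤ) - 1) ((i : ℤ) - 1)) *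
          ((-1:ℤ)^k * (((t-1).choose k : ℕ) : ℤ) * ((((a-i) + (b-1) - k).choose (a-i) : ℕ) : ℤ)) := by
        rw [← Finset.Ico_add_one_right_eq_Icc, Finset.sum_Ico_eq_sum_range]
        have hbr : b + 1 - 1 = (b-1)+1 := by omega
        rw [hbr]
        apply Finset.sum_congr rfl
        intro k hk
        rw [Finset.mem_range] at hk
        have e1 : ((a : ℤ) - i + b - ((1+k : ℕ) : ℤ) : ℤ) = (((a-i) + (b-1) - k : ℕ) : ℤ) := by
          push_cast
          omega
        have e2 : ((a : ℤ) - i) = (((a-i) : ℕ) : ℤ) := by omega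
        have e3 : ((t : ℤ) - 1) = (((t-1) : ℕ) : ℤ) := by omega
        have e4 : (((1+k : ℕ) : ℤ) - 1) = ((k : ℕ) : ℤ) := by push_cast; ring
        rw [e1, e2, C_natCast, e3, e4, C_natCast]
        have e5 : (-1:ℤ)^(i+(1+k)+1) = (-1:ℤ)^i * (-1:ℤ)^k := by
          rw [show i+(1+k)+1 = (i+k)+2 by omega, pow_add, pow_add]
          norm_num
        rw [e5]
        ring
    _ = ((-1:ℤ)^i * C ((t : ℤ) - 1) ((i : ℤ) - 1)) *
          ((-1:ℤ)^(b-1) * ibinom (((t-1:ℕ):ℤ) - 1 - ((a-i:ℕ):ℤ)) ((b-1:ℕ) : ℤ)) := by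
        rw [← Finset.mul_sum, key (t-1) (a-i) (b-1)]
    _ = (-1 : ℤ) ^ (b + i + 1) * C ((t : ℤ) - 1) ((i : ℤ) - 1) *
          ibinom ((t : ℤ) - 2 - a + i) ((b : ℤ) - 1) := by
        have e6 : (((t-1:ℕ):ℤ) - 1 - ((a-i:ℕ):ℤ)) = (t : ℤ) - 2 - a + i := by omega
        have e7 : (((b-1:ℕ)) : ℤ) = (b : ℤ) - 1 := by omega
        have e8 : (-1:ℤ)^(b+i+1) = (-1:ℤ)^i * (-1:ℤ)^(b-1) := by
          rw [show b+i+1 = ((b-1)+i)+2 by omega, pow_add, pow_add]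
          ring
        rw [e6, e7, e8]
        ring
end

section
/- For integers b ≥ 1, a, i, t, the identity (-1)^{b+1} · binom(t-2-a+i, b-1) = ∑_{j=0}^{b-1} (-1)^j · binom(a-i+b-1-j, b-1-j) · binom(t-1, j) holds. -/
open Polynomial in
lemma descPoch_eval_neg (m k : ℕ) :
    (descPochhammer ℤ k).eval (-(m : ℤ)) = (-1) ^ k * ((m + k - 1).descFactorial k : ℤ) := by
  rcases Nat.eq_zero_or_pos m with hm | hm
  · subst hm
    rcases Nat.eq_zero_or_pos k with hk | hk
    · subst hk; simp
    · have hne : k ≠ 0 := hk.ne'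
      simp [descPochhammer_ne_zero_eval_zero (R := ℤ) hne,
        Nat.descFactorial_eq_zero_iff_lt.mpr (by omega : 0 + k - 1 < k)]
      omega
  · have h1 : (descPochhammer ℤ k).eval (-(m : ℤ)) =
        (ascPochhammer ℤ k).eval (-(m : ℤ) - k + 1) := by
      rw [descPochhammer_eval_eq_ascPochhammer]
    have h2 : (-(m : ℤ) - k + 1) = -((m + k - 1 : ℕ) : ℤ) := by
      push_cast [Nat.cast_sub (by omega : 1 ≤ m + k)]; ring
    rw [h1, h2, ascPochhammer_eval_neg_eq_descPochhammer,
      descPochhammer_eval_eq_descFactorial]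

open Ring in
lemma ibinom_eq_ring_choose (x : ℤ) (k : ℕ) :
    ibinom x (k : ℤ) = Ring.choose x k := by
  have hk : ¬ ((k : ℤ) < 0) := by omega
  have htk : ((k : ℤ)).toNat = k := by omega
  refine nsmul_right_injective (n := Nat.factorial k) (Nat.factorial_ne_zero k) ?_
  simp only
  rw [← Ring.descPochhammer_eq_factorial_smul_choose, ← Polynomial.eval_eq_smeval]
  by_cases hx : 0 ≤ x
  · rw [ibinom, if_neg hk, if_pos hx, htk]
    have : x = ((x.toNat : ℕ) : ℤ) := by omega
    rw [this, descPochhammer_eval_eq_descFactorial, nsmul_eq_mul,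
      Nat.descFactorial_eq_factorial_mul_choose]
    rw [Int.toNat_natCast]
    push_cast; ring
  · rw [ibinom, if_neg hk, if_neg hx, htk]
    set m := (-x).toNat with hm
    have hxm : x = -((m : ℕ) : ℤ) := by omega
    have hT : ((-x) + (k : ℤ) - 1).toNat = m + k - 1 := by omega
    rw [hT, hxm, descPoch_eval_neg, nsmul_eq_mul,
      Nat.descFactorial_eq_factorial_mul_choose]
    push_cast; ring

open Ring in
/-- Upper negation for `Ring.choose` over `ℤ`. -/
lemma ring_choose_reflect (y : ℤ) (k : ℕ) :
    Ring.choose ((k : ℤ) - 1 - y) k = (-1) ^ k * Ring.choose y k := by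
  have key : (descPochhammer ℤ k).eval ((k : ℤ) - 1 - y) =
      (-1) ^ k * (descPochhammer ℤ k).eval y := by
    rw [descPochhammer_eval_eq_ascPochhammer]
    have : ((k : ℤ) - 1 - y - k + 1) = -y := by ring
    rw [this, ascPochhammer_eval_neg_eq_descPochhammer]
  have hch : ∀ z : ℤ, ((Nat.factorial k : ℕ) : ℤ) * Ring.choose z k =
      (descPochhammer ℤ k).eval z := fun z => by
    rw [Polynomial.eval_eq_smeval, Ring.descPochhammer_eq_factorial_smul_choose, nsmul_eq_mul]
  refine nsmul_right_injective (n := Nat.factorial k) (Nat.factorial_ne_zero k) ?_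
  simp only [nsmul_eq_mul]
  rw [hch, key, ← hch y]
  ring

theorem stmt4 (a i t : ℤ) (b : ℕ) (hb : 1 ≤ b) :
    (-1 : ℤ) ^ (b + 1) * ibinom (t - 2 - a + i) ((b : ℤ) - 1) =
      ∑ j ∈ Finset.range b,
        (-1 : ℤ) ^ j * ibinom (a - i + b - 1 - j) ((b : ℤ) - 1 - j) *
          ibinom (t - 1) j := by
  obtain ⟨m, rfl⟩ : ∃ m, b = m + 1 := ⟨b - 1, by omega⟩
  have hcast : ((m + 1 : ℕ) : ℤ) - 1 = (m : ℤ) := by push_cast; ring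
  -- rewrite each summand
  have hterm : ∀ j ∈ Finset.range (m + 1),
      (-1 : ℤ) ^ j * ibinom (a - i + (m + 1 : ℕ) - 1 - j) (((m + 1 : ℕ) : ℤ) - 1 - j) *
        ibinom (t - 1) j
      = (-1 : ℤ) ^ m * (Ring.choose (t - 1) j * Ring.choose (-(a - i) - 1) (m - j)) := by
    intro j hj
    have hjm : j ≤ m := by simpa [Nat.lt_succ_iff] using Finset.mem_range.mp hj
    have h1 : ((m + 1 : ℕ) : ℤ) - 1 - j = ((m - j : ℕ) : ℤ) := by
      push_cast [Nat.cast_sub hjm]; ring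
    have h2 : (a - i + ((m + 1 : ℕ) : ℤ) - 1 - j) =
        ((m - j : ℕ) : ℤ) - 1 - (-(a - i) - 1) := by
      rw [Nat.cast_sub hjm]; push_cast; ring
    rw [h1, h2, ibinom_eq_ring_choose, ibinom_eq_ring_choose, ring_choose_reflect]
    have hsign : (-1 : ℤ) ^ j * (-1 : ℤ) ^ (m - j) = (-1 : ℤ) ^ m := by
      rw [← pow_add]; congr 1; omega
    rw [← mul_assoc, ← mul_assoc, hsign]
    ring
  rw [Finset.sum_congr rfl hterm, ← Finset.mul_sum]
  have hvdm : ∑ j ∈ Finset.range (m + 1),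
      Ring.choose (t - 1) j * Ring.choose (-(a - i) - 1) (m - j)
      = Ring.choose ((t - 1) + (-(a - i) - 1)) m := by
    rw [Ring.add_choose_eq m (Commute.all _ _),
      Finset.Nat.sum_antidiagonal_eq_sum_range_succ
        (fun x y => Ring.choose (t - 1) x * Ring.choose (-(a - i) - 1) y)]
  rw [hvdm, hcast]
  rw [show (t - 1) + (-(a - i) - 1) = t - 2 - a + i from by ring, ← ibinom_eq_ring_choose]
  have hsign : (-1 : ℤ) ^ (m + 1 + 1) = (-1 : ℤ) ^ m := by
    rw [pow_succ, pow_succ]; ring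
  rw [hsign]
end

section
/- For natural numbers t ≥ 1 and 0 ≤ a, b ≤ t, the double alternating sum ∑_{i=1}^{a} ∑_{j=1}^{b} (-1)^{i+j+1} · C(a-i+b-j, a-i) · C(t-1, i-1) · C(t-1, j-1) equals (-1)^{a+b+1} · ∑_{i=1}^{min(a,b)} C(t-1-i, a-i) · C(t-1-i, b-i). -/
open Finset

def alf (m n : ℕ) : ℤ := ∑ q ∈ range (n+1), (-1)^q * (Nat.choose m (n-q) : ℤ)

lemma negpow (k l : ℕ) (h : k % 2 = l % 2) : (-1:ℤ)^k = (-1)^l := by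
  rw [neg_one_pow_eq_pow_mod_two k, h, ← neg_one_pow_eq_pow_mod_two l]

lemma alf_eq (m n : ℕ) (h : n ≤ m) : alf m n = Nat.choose (m-1) n := by
  induction n with
  | zero => simp [alf]
  | succ n ih =>
    have hn : n ≤ m := Nat.le_of_succ_le h
    obtain ⟨m', rfl⟩ : ∃ m', m = m' + 1 := ⟨m-1, by omega⟩
    rw [alf, Finset.sum_range_succ']
    have e1 : (∑ q ∈ range (n+1), (-1:ℤ)^(q+1) * (Nat.choose (m'+1) (n+1-(q+1)) : ℤ))
        = -alf (m'+1) n := by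
      rw [alf, ← Finset.sum_neg_distrib]
      refine Finset.sum_congr rfl fun q hq => ?_
      rw [Nat.succ_sub_succ, pow_succ]
      ring
    rw [e1, ih hn]
    have hp : Nat.choose (m'+1) (n+1) = Nat.choose m' n + Nat.choose m' (n+1) :=
      Nat.choose_succ_succ' m' n
    simp only [Nat.add_sub_cancel, Nat.sub_zero, Nat.choose_zero_right] at *
    push_cast [hp]
    ring

def Sb (m A B : ℕ) : ℤ :=
  ∑ p ∈ range (A+1), ∑ q ∈ range (B+1),
    (-1)^(p+q) * (Nat.choose (p+q) p : ℤ) * Nat.choose m (A-p) * Nat.choose m (B-q)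

def Rb (m A B : ℕ) : ℤ :=
  ∑ k ∈ range (min A B + 1), (Nat.choose (m-1-k) (A-k) : ℤ) * Nat.choose (m-1-k) (B-k)

lemma e2 (m A' B' : ℕ) :
    Sb m A' (B'+1)
      = -(∑ p ∈ range (A'+1), ∑ q ∈ range (B'+1),
          (-1:ℤ)^(p+q) * (Nat.choose (p+q+1) p : ℤ) * Nat.choose m (A'-p) * Nat.choose m (B'-q))
        + (Nat.choose m (B'+1) : ℤ) * alf m A' := by
  rw [Sb]
  have : ∀ p ∈ range (A'+1),
      (∑ q ∈ range (B'+2), (-1:ℤ)^(p+q) * (Nat.choose (p+q) p : ℤ) * Nat.choose m (A'-p) * Nat.choose m (B'+1-q))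
      = (∑ q ∈ range (B'+1), -((-1:ℤ)^(p+q) * (Nat.choose (p+q+1) p : ℤ) * Nat.choose m (A'-p) * Nat.choose m (B'-q)))
        + (Nat.choose m (B'+1) : ℤ) * ((-1)^p * Nat.choose m (A'-p)) := by
    intro p hp
    rw [Finset.sum_range_succ']
    congr 1
    · refine Finset.sum_congr rfl fun q hq => ?_
      have h1 : p + (q+1) = p + q + 1 := by ring
      have h2 : B' + 1 - (q+1) = B' - q := by omega
      rw [h1, h2, pow_succ]
      ring
    · simp [Nat.choose_self]
      ring
  rw [Finset.sum_congr rfl this, Finset.sum_add_distrib]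
  congr 1
  · simp only [Finset.sum_neg_distrib]
  · rw [alf, Finset.mul_sum]

lemma e3 (m A' B' : ℕ) :
    Sb m (A'+1) B'
      = -(∑ p ∈ range (A'+1), ∑ q ∈ range (B'+1),
          (-1:ℤ)^(p+q) * (Nat.choose (p+q+1) (p+1) : ℤ) * Nat.choose m (A'-p) * Nat.choose m (B'-q))
        + (Nat.choose m (A'+1) : ℤ) * alf m B' := by
  rw [Sb, Finset.sum_range_succ']
  congr 1
  · rw [← Finset.sum_neg_distrib]
    refine Finset.sum_congr rfl fun p hp => ?_
    rw [← Finset.sum_neg_distrib]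
    refine Finset.sum_congr rfl fun q hq => ?_
    have h1 : p + 1 + q = p + q + 1 := by ring
    have h2 : A' + 1 - (p+1) = A' - p := by omega
    rw [h1, h2, pow_succ]
    ring
  · rw [alf, Finset.mul_sum]
    refine Finset.sum_congr rfl fun q hq => ?_
    simp [Nat.choose_zero_right]
    ring

lemma e1 (m A' B' : ℕ) :
    Sb m (A'+1) (B'+1)
      = (∑ p ∈ range (A'+1), ∑ q ∈ range (B'+1),
          (-1:ℤ)^(p+q) * (Nat.choose (p+q+1) p : ℤ) * Nat.choose m (A'-p) * Nat.choose m (B'-q))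
        + (∑ p ∈ range (A'+1), ∑ q ∈ range (B'+1),
          (-1:ℤ)^(p+q) * (Nat.choose (p+q+1) (p+1) : ℤ) * Nat.choose m (A'-p) * Nat.choose m (B'-q))
        - (Nat.choose m (B'+1) : ℤ) * alf m A'
        + (Nat.choose m (A'+1) : ℤ) * alf m (B'+1) := by
  rw [Sb, Finset.sum_range_succ']
  have hin : ∀ p ∈ range (A'+1),
      (∑ q ∈ range (B'+2), (-1:ℤ)^(p+1+q) * (Nat.choose (p+1+q) (p+1) : ℤ) * Nat.choose m (A'+1-(p+1)) * Nat.choose m (B'+1-q))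
      = (∑ q ∈ range (B'+1),
          ((-1:ℤ)^(p+q) * (Nat.choose (p+q+1) p : ℤ) * Nat.choose m (A'-p) * Nat.choose m (B'-q)
           + (-1:ℤ)^(p+q) * (Nat.choose (p+q+1) (p+1) : ℤ) * Nat.choose m (A'-p) * Nat.choose m (B'-q)))
        + -((-1:ℤ)^p * ((Nat.choose m (B'+1) : ℤ) * Nat.choose m (A'-p))) := by
    intro p hp
    rw [Finset.sum_range_succ']
    congr 1
    · refine Finset.sum_congr rfl fun q hq => ?_
      have h1 : p + 1 + (q+1) = (p+q+1) + 1 := by ring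
      have h2 : B' + 1 - (q+1) = B' - q := by omega
      have h3 : A' + 1 - (p+1) = A' - p := by omega
      have h4 : Nat.choose (p+q+1+1) (p+1) = Nat.choose (p+q+1) p + Nat.choose (p+q+1) (p+1) :=
        Nat.choose_succ_succ' (p+q+1) p
      rw [h1, h2, h3, h4]
      have h5 : (-1:ℤ)^(p+q+1+1) = (-1)^(p+q) := negpow _ _ (by omega)
      rw [h5]
      push_cast
      ring
    · have h3 : A' + 1 - (p+1) = A' - p := by omega
      simp [h3, Nat.choose_self]
      have h5 : (-1:ℤ)^(p+1+0) = -(-1)^p := by rw [Nat.add_zero, pow_succ]; ring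
      rw [h5]
      ring
  rw [Finset.sum_congr rfl hin]
  simp only [Finset.sum_add_distrib]
  have hz : (∑ q ∈ range (B'+2), (-1:ℤ)^(0+q) * (Nat.choose (0+q) 0 : ℤ) * Nat.choose m (A'+1-0) * Nat.choose m (B'+1-q))
      = (Nat.choose m (A'+1) : ℤ) * alf m (B'+1) := by
    rw [alf, Finset.mul_sum]
    refine Finset.sum_congr rfl fun q hq => ?_
    simp [Nat.choose_zero_right]
    ring
  rw [hz]
  have hx : (∑ p ∈ range (A'+1), -((-1:ℤ)^p * ((Nat.choose m (B'+1) : ℤ) * Nat.choose m (A'-p))))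
      = -((Nat.choose m (B'+1) : ℤ) * alf m A') := by
    rw [Finset.sum_neg_distrib, alf, Finset.mul_sum, neg_inj]
    refine Finset.sum_congr rfl fun p hp => ?_
    ring
  rw [hx]
  ring

lemma Sb_rec (m A' B' : ℕ) (hB : B' + 1 ≤ m) :
    Sb m (A'+1) (B'+1) + Sb m A' (B'+1) + Sb m (A'+1) B'
      = (Nat.choose m (A'+1) : ℤ) * Nat.choose m (B'+1) := by
  rw [e1, e2, e3]
  have h1 : alf m (B'+1) = Nat.choose (m-1) (B'+1) := alf_eq m (B'+1) hB
  have h2 : alf m B' = Nat.choose (m-1) B' := alf_eq m B' (by omega)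
  have h3 : Nat.choose m (B'+1) = Nat.choose (m-1) B' + Nat.choose (m-1) (B'+1) := by
    obtain ⟨m', rfl⟩ : ∃ m', m = m' + 1 := ⟨m-1, by omega⟩
    simpa using Nat.choose_succ_succ' m' B'
  rw [h1, h2, h3]
  push_cast
  ring


lemma Rb_comm (m A B : ℕ) : Rb m A B = Rb m B A := by
  rw [Rb, Rb, min_comm]
  exact Finset.sum_congr rfl fun k _ => mul_comm _ _

-- telescoping bracket, for k ≤ A-1, A ≤ B ≤ m (A ≥ 1)
lemma brak (m A B k : ℕ) (hk : k + 1 ≤ A) (hAB : A ≤ B) (hBm : B ≤ m) :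
    (Nat.choose (m-1-k) (A-k) : ℤ) * Nat.choose (m-1-k) (B-k)
      + (Nat.choose (m-1-k) (A-1-k) : ℤ) * Nat.choose (m-1-k) (B-k)
      + (Nat.choose (m-1-k) (A-k) : ℤ) * Nat.choose (m-1-k) (B-1-k)
    = ((Nat.choose (m-k) (A-k) : ℤ) * Nat.choose (m-k) (B-k))
      - ((Nat.choose (m-(k+1)) (A-(k+1)) : ℤ) * Nat.choose (m-(k+1)) (B-(k+1))) := by
  set n1 := m-1-k with hn1
  set a1 := A-1-k with ha1
  set b1 := B-1-k with hb1
  have h1 : m - k = n1 + 1 := by omega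
  have h2 : A - k = a1 + 1 := by omega
  have h3 : B - k = b1 + 1 := by omega
  have h4 : m - (k+1) = n1 := by omega
  have h5 : A - (k+1) = a1 := by omega
  have h6 : B - (k+1) = b1 := by omega
  have h7 : A - 1 - k = a1 := by omega
  have h8 : B - 1 - k = b1 := by omega
  rw [h1, h2, h3, h4, h5, h6,
      Nat.choose_succ_succ' n1 a1, Nat.choose_succ_succ' n1 b1]
  push_cast
  ring

lemma Rb_rec_le (m A B : ℕ) (hA : 1 ≤ A) (hAB : A ≤ B) (hBm : B ≤ m) :
    Rb m A B + Rb m (A-1) B + Rb m A (B-1)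
      = (Nat.choose m A : ℤ) * Nat.choose m B := by
  have hminAB : min A B = A := min_eq_left hAB
  have hminA'B : min (A-1) B = A - 1 := min_eq_left (by omega)
  have htel : ∑ k ∈ range A,
      (((Nat.choose (m-1-k) (A-k) : ℤ) * Nat.choose (m-1-k) (B-k)
      + (Nat.choose (m-1-k) (A-1-k) : ℤ) * Nat.choose (m-1-k) (B-k)
      + (Nat.choose (m-1-k) (A-k) : ℤ) * Nat.choose (m-1-k) (B-1-k)))
      = ((Nat.choose m A : ℤ) * Nat.choose m B)
        - ((Nat.choose (m-A) (A-A) : ℤ) * Nat.choose (m-A) (B-A)) := by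
    have := Finset.sum_range_sub' (fun k => (Nat.choose (m-k) (A-k) : ℤ) * Nat.choose (m-k) (B-k)) A
    simp only [Nat.sub_zero] at this
    rw [← this]
    · refine Finset.sum_congr rfl fun k hk => ?_
      rw [Finset.mem_range] at hk
      exact brak m A B k (by omega) hAB hBm
  rcases eq_or_lt_of_le hAB with hEq | hLt
  · -- A = B
    subst hEq
    have hminAB' : min A (A-1) = A - 1 := min_eq_right (by omega)
    rw [Rb, Rb, Rb, hminAB, hminA'B, hminAB']
    have hA1 : A - 1 + 1 = A := by omega
    rw [hA1, Finset.sum_range_succ _ A]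
    have htop : (Nat.choose (m-1-A) (A-A) : ℤ) * Nat.choose (m-1-A) (A-A) = 1 := by
      simp [Nat.sub_self]
    have hend : (Nat.choose (m-A) (A-A) : ℤ) * Nat.choose (m-A) (A-A) = 1 := by
      simp [Nat.sub_self]
    rw [htop]
    have := htel
    rw [hend] at this
    have hsplit : ∑ k ∈ range A, (Nat.choose (m-1-k) (A-k) : ℤ) * Nat.choose (m-1-k) (A-k)
        + ∑ k ∈ range A, (Nat.choose (m-1-k) (A-1-k) : ℤ) * Nat.choose (m-1-k) (A-k)
        + ∑ k ∈ range A, (Nat.choose (m-1-k) (A-k) : ℤ) * Nat.choose (m-1-k) (A-1-k)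
        = (Nat.choose m A : ℤ) * Nat.choose m A - 1 := by
      rw [← this, ← Finset.sum_add_distrib, ← Finset.sum_add_distrib]
    linarith [hsplit]
  · -- A < B
    have hminAB'' : min A (B-1) = A := min_eq_left (by omega)
    rw [Rb, Rb, Rb, hminAB, hminA'B, hminAB'']
    have hA1 : A - 1 + 1 = A := by omega
    rw [hA1, Finset.sum_range_succ _ A, Finset.sum_range_succ
      (fun k => (Nat.choose (m-1-k) (A-k) : ℤ) * Nat.choose (m-1-k) (B-1-k)) A]
    have hsplit : ∑ k ∈ range A, (Nat.choose (m-1-k) (A-k) : ℤ) * Nat.choose (m-1-k) (B-k)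
        + ∑ k ∈ range A, (Nat.choose (m-1-k) (A-1-k) : ℤ) * Nat.choose (m-1-k) (B-k)
        + ∑ k ∈ range A, (Nat.choose (m-1-k) (A-k) : ℤ) * Nat.choose (m-1-k) (B-1-k)
        = (Nat.choose m A : ℤ) * Nat.choose m B
          - ((Nat.choose (m-A) (A-A) : ℤ) * Nat.choose (m-A) (B-A)) := by
      rw [← htel, ← Finset.sum_add_distrib, ← Finset.sum_add_distrib]
    have htops : (Nat.choose (m-1-A) (A-A) : ℤ) * Nat.choose (m-1-A) (B-A)
        + (Nat.choose (m-1-A) (A-A) : ℤ) * Nat.choose (m-1-A) (B-1-A)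
        = (Nat.choose (m-A) (A-A) : ℤ) * Nat.choose (m-A) (B-A) := by
      have e1 : A - A = 0 := by omega
      have e2 : m - A = (m-1-A) + 1 := by omega
      have e3 : B - A = (B-1-A) + 1 := by omega
      rw [e1, e2, e3, Nat.choose_succ_succ' (m-1-A) (B-1-A)]
      simp
      ring
    linarith [hsplit, htops]

lemma Rb_rec (m A' B' : ℕ) (hAm : A' + 1 ≤ m) (hBm : B' + 1 ≤ m) :
    Rb m (A'+1) (B'+1) + Rb m A' (B'+1) + Rb m (A'+1) B'
      = (Nat.choose m (A'+1) : ℤ) * Nat.choose m (B'+1) := by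
  rcases le_total (A'+1) (B'+1) with h | h
  · have := Rb_rec_le m (A'+1) (B'+1) (by omega) h hBm
    simpa using this
  · have := Rb_rec_le m (B'+1) (A'+1) (by omega) h hAm
    simp only [Nat.add_sub_cancel] at this ⊢
    rw [Rb_comm m (A'+1) (B'+1), Rb_comm m A' (B'+1), Rb_comm m (A'+1) B']
    linarith [this]


lemma Sb_zero_left (m B : ℕ) : Sb m 0 B = alf m B := by
  simp [Sb, alf, Finset.sum_range_one]

lemma Sb_zero_right (m A : ℕ) : Sb m A 0 = alf m A := by
  rw [Sb, alf]
  refine Finset.sum_congr rfl fun p hp => ?_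
  simp [Finset.sum_range_one]

lemma Rb_zero_left (m B : ℕ) : Rb m 0 B = Nat.choose (m-1) B := by
  simp [Rb, Finset.sum_range_one]

lemma Rb_zero_right (m A : ℕ) : Rb m A 0 = Nat.choose (m-1) A := by
  simp [Rb, Finset.sum_range_one]


private lemma key_s6 : ∀ n m A B, A + B ≤ n → A ≤ m → B ≤ m → Sb m A B = Rb m A B := by
  intro n
  induction n with
  | zero =>
    intro m A B hn hA hB
    obtain rfl : A = 0 := by omega
    obtain rfl : B = 0 := by omega
    rw [Sb_zero_left, Rb_zero_left, alf_eq m 0 (by omega)]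
  | succ n ih =>
    intro m A B hn hA hB
    rcases A with _ | A'
    · rw [Sb_zero_left, Rb_zero_left, alf_eq m B hB]
    rcases B with _ | B'
    · rw [Sb_zero_right, Rb_zero_right, alf_eq m (A'+1) hA]
    have h1 := Sb_rec m A' B' hB
    have h2 := Rb_rec m A' B' hA hB
    have h3 := ih m A' (B'+1) (by omega) (by omega) hB
    have h4 := ih m (A'+1) B' (by omega) hA (by omega)
    linarith

theorem stmt6 (t a b : ℕ) (ht : 1 ≤ t) (ha : a ≤ t) (hb : b ≤ t) :
    (∑ i ∈ Finset.Icc 1 a, ∑ j ∈ Finset.Icc 1 b,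
        (-1 : ℤ) ^ (i + j + 1) * Nat.choose (a - i + (b - j)) (a - i) *
          Nat.choose (t - 1) (i - 1) * Nat.choose (t - 1) (j - 1)) =
      (-1 : ℤ) ^ (a + b + 1) *
        ∑ i ∈ Finset.Icc 1 (min a b),
          (Nat.choose (t - 1 - i) (a - i) * Nat.choose (t - 1 - i) (b - i) : ℤ) := by
  rcases Nat.eq_zero_or_pos a with rfl | hA
  · simp
  rcases Nat.eq_zero_or_pos b with rfl | hB
  · simp
  obtain ⟨A, rfl⟩ : ∃ A, a = A + 1 := ⟨a-1, by omega⟩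
  obtain ⟨B, rfl⟩ : ∃ B, b = B + 1 := ⟨b-1, by omega⟩
  set m := t - 1 with hm
  have hAm : A ≤ m := by omega
  have hBm : B ≤ m := by omega
  have hkey : Sb m A B = Rb m A B := key_s6 (A+B) m A B le_rfl hAm hBm
  have hR : (∑ i ∈ Finset.Icc 1 (min (A+1) (B+1)),
        (Nat.choose (t-1-i) (A+1-i) * Nat.choose (t-1-i) (B+1-i) : ℤ))
      = Rb m A B := by
    rw [show Finset.Icc 1 (min (A+1) (B+1)) = Finset.Ico 1 (min (A+1) (B+1)+1) from rfl,
        Finset.sum_Ico_eq_sum_range]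
    rw [Rb]
    have hmin : min (A+1) (B+1) + 1 - 1 = min A B + 1 := by omega
    rw [hmin]
    refine Finset.sum_congr rfl fun k hk => ?_
    have e1 : t - 1 - (1+k) = m - 1 - k := by omega
    have e2 : A + 1 - (1+k) = A - k := by omega
    have e3 : B + 1 - (1+k) = B - k := by omega
    rw [e1, e2, e3]
  rw [hR, ← hkey]
  have hL : (∑ i ∈ Finset.Icc 1 (A+1), ∑ j ∈ Finset.Icc 1 (B+1),
        (-1 : ℤ) ^ (i + j + 1) * Nat.choose (A+1 - i + (B+1 - j)) (A+1 - i) *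
          Nat.choose (t - 1) (i - 1) * Nat.choose (t - 1) (j - 1))
      = ∑ p ∈ range (A+1), ∑ q ∈ range (B+1),
        ((-1 : ℤ) ^ ((1+p) + (1+q) + 1) * Nat.choose (A+1 - (1+p) + (B+1 - (1+q))) (A+1 - (1+p)) *
          Nat.choose (t - 1) (1+p - 1) * Nat.choose (t - 1) (1+q - 1)) := by
    rw [show Finset.Icc 1 (A+1) = Finset.Ico 1 (A+1+1) from rfl, Finset.sum_Ico_eq_sum_range]
    have : A + 1 + 1 - 1 = A + 1 := by omega
    rw [this]
    refine Finset.sum_congr rfl fun p hp => ?_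
    rw [show Finset.Icc 1 (B+1) = Finset.Ico 1 (B+1+1) from rfl, Finset.sum_Ico_eq_sum_range]
    have : B + 1 + 1 - 1 = B + 1 := by omega
    rw [this]
  rw [hL]
  have hrefl : (∑ p ∈ range (A+1), ∑ q ∈ range (B+1),
        ((-1 : ℤ) ^ ((1+p) + (1+q) + 1) * Nat.choose (A+1 - (1+p) + (B+1 - (1+q))) (A+1 - (1+p)) *
          Nat.choose (t - 1) (1+p - 1) * Nat.choose (t - 1) (1+q - 1)))
      = ∑ p ∈ range (A+1), ∑ q ∈ range (B+1),
        ((-1 : ℤ) ^ ((1+(A-p)) + (1+(B-q)) + 1) * Nat.choose (p + q) p *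
          Nat.choose (t - 1) (A-p) * Nat.choose (t - 1) (B-q)) := by
    rw [← Finset.sum_range_reflect]
    refine Finset.sum_congr rfl fun p hp => ?_
    rw [← Finset.sum_range_reflect]
    refine Finset.sum_congr rfl fun q hq => ?_
    rw [Finset.mem_range] at hp hq
    have e0 : A + 1 - 1 - p = A - p := by omega
    have e0' : B + 1 - 1 - q = B - q := by omega
    rw [e0, e0']
    have e1 : A + 1 - (1 + (A - p)) = p := by omega
    have e2 : B + 1 - (1 + (B - q)) = q := by omega
    have e3 : 1 + (A - p) - 1 = A - p := by omega
    have e4 : 1 + (B - q) - 1 = B - q := by omega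
    rw [e1, e2, e3, e4]
  rw [hrefl, Sb, Finset.mul_sum]
  refine Finset.sum_congr rfl fun p hp => ?_
  rw [Finset.mul_sum]
  refine Finset.sum_congr rfl fun q hq => ?_
  rw [Finset.mem_range] at hp hq
  have hs : (-1:ℤ) ^ ((1+(A-p)) + (1+(B-q)) + 1)
      = (-1) ^ (A+1 + (B+1) + 1) * (-1) ^ (p+q) := by
    rw [← pow_add]
    exact negpow _ _ (by omega)
  rw [hs]
  ring
end

section
/- Define c(t,a,b) = ∑_{i=1}^{a} ∑_{j=1}^{b} (-1)^{i+j+1} · C(a-i+b-j, a-i) · C(t-1, i-1) · C(t-1, j-1). Then for t ≥ 2 and a, b ≥ 1, the recursion c(t,a,b) = (-1)^{a+b+1} · C(t-2, a-1) · C(t-2, b-1) + c(t-1, a-1, b-1) holds. -/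
open Finset

/-- The double alternating sum `c(t,a,b)`. -/
def c (t a b : ℕ) : ℤ :=
  ∑ i ∈ Finset.Icc 1 a, ∑ j ∈ Finset.Icc 1 b,
    (-1 : ℤ) ^ (i + j + 1) * Nat.choose (a - i + (b - j)) (a - i) *
      Nat.choose (t - 1) (i - 1) * Nat.choose (t - 1) (j - 1)

lemma sign_eq {X Y : ℕ} (h : X % 2 = Y % 2) : ((-1:ℤ))^X = (-1)^Y := by
  rcases Nat.even_or_odd X with hX | hX
  · have hx := Nat.even_iff.mp hX
    have hY : Even Y := Nat.even_iff.mpr (by omega)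
    rw [hX.neg_one_pow, hY.neg_one_pow]
  · have hx := Nat.odd_iff.mp hX
    have hY : Odd Y := Nat.odd_iff.mpr (by omega)
    rw [hX.neg_one_pow, hY.neg_one_pow]

/-- Inner alternating sum. -/
def A (s p n : ℕ) : ℤ :=
  ∑ q ∈ range (n+1), ((-1:ℤ)^q * ((p+q).choose p : ℤ)) * ((s.choose (n-q)) : ℤ)

/-- Reindexed double sum. -/
def E (s m n : ℕ) : ℤ :=
  ∑ p ∈ range (m+1), ((-1:ℤ)^p * A s p n) * ((s.choose (m-p)) : ℤ)

lemma pascal_sum (s n : ℕ) (g : ℕ → ℤ) :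
    ∑ q ∈ range (n+1+1), g q * (((s+1).choose (n+1-q) : ℕ) : ℤ) =
      (∑ q ∈ range (n+1+1), g q * ((s.choose (n+1-q) : ℕ) : ℤ)) +
        ∑ q ∈ range (n+1), g q * ((s.choose (n-q) : ℕ) : ℤ) := by
  rw [sum_range_succ, sum_range_succ (fun q => g q * ((s.choose (n+1-q) : ℕ) : ℤ))]
  have h : ∀ q ∈ range (n+1), g q * (((s+1).choose (n+1-q) : ℕ) : ℤ) =
      g q * ((s.choose (n+1-q) : ℕ) : ℤ) + g q * ((s.choose (n-q) : ℕ) : ℤ) := by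
    intro q hq
    have hq' : q ≤ n := Nat.lt_succ_iff.mp (mem_range.mp hq)
    have h1 : n + 1 - q = (n - q) + 1 := by omega
    rw [h1, Nat.choose_succ_succ]
    push_cast
    ring
  rw [sum_congr rfl h, sum_add_distrib]
  simp only [Nat.sub_self, Nat.choose_zero_right, Nat.cast_one]
  ring

lemma A_pascal (s p n : ℕ) : A (s+1) p (n+1) = A s p (n+1) + A s p n :=
  pascal_sum s n fun q => (-1:ℤ)^q * ((p+q).choose p : ℤ)

lemma A_zero_succ (s n : ℕ) : A s 0 (n+1) + A s 0 n = (s.choose (n+1) : ℤ) := by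
  unfold A
  rw [sum_range_succ' (fun q => ((-1:ℤ)^q * (((0:ℕ)+q).choose 0 : ℤ)) * ((s.choose (n+1-q)) : ℤ))]
  simp only [Nat.choose_zero_right, Nat.cast_one, pow_succ, pow_zero, Nat.zero_add,
    Nat.succ_sub_succ, Nat.sub_zero, Nat.add_sub_cancel, one_mul, mul_one]
  have hz : ∑ x ∈ range (n+1), ((-1:ℤ)^x * -1 * ((s.choose (n-x) : ℕ) : ℤ)) =
      - ∑ x ∈ range (n+1), ((-1:ℤ)^x * ((s.choose (n-x) : ℕ) : ℤ)) := by
    rw [← sum_neg_distrib]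
    exact sum_congr rfl fun x _ => by ring
  rw [hz]
  ring

lemma A_step (s p n : ℕ) : A s (p+1) (n+1) + A s (p+1) n = A s p (n+1) := by
  unfold A
  rw [sum_range_succ' (fun q => ((-1:ℤ)^q * (((p+1)+q).choose (p+1) : ℤ)) * ((s.choose (n+1-q)) : ℤ)),
      sum_range_succ' (fun q => ((-1:ℤ)^q * ((p+q).choose p : ℤ)) * ((s.choose (n+1-q)) : ℤ))]
  rw [add_right_comm, ← sum_add_distrib]
  have h : ∀ q ∈ range (n+1),
      ((-1:ℤ)^(q+1) * (((p+1)+(q+1)).choose (p+1) : ℤ)) * ((s.choose (n+1-(q+1))) : ℤ) +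
        ((-1:ℤ)^q * (((p+1)+q).choose (p+1) : ℤ)) * ((s.choose (n-q)) : ℤ) =
      ((-1:ℤ)^(q+1) * ((p+(q+1)).choose p : ℤ)) * ((s.choose (n+1-(q+1))) : ℤ) := by
    intro q hq
    have h1 : n + 1 - (q+1) = n - q := by omega
    have h2 : (p+1)+(q+1) = (p+q+1)+1 := by omega
    have h3 : p+(q+1) = p+q+1 := by omega
    have h4 : (p+1)+q = (p+q)+1 := by omega
    rw [h1, h2, h3, h4]
    have h5 : (((p+q+1)+1).choose (p+1) : ℤ) = ((p+q+1).choose p : ℤ) + ((p+q+1).choose (p+1) : ℤ) := by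
      exact_mod_cast congrArg (Nat.cast : ℕ → ℤ) (Nat.choose_succ_succ (p+q+1) p)
    rw [h5]
    ring
  rw [sum_congr rfl h]
  simp [Nat.choose_self]

lemma E_pascal (s m n : ℕ) :
    E (s+1) (m+1) (n+1) = E s (m+1) (n+1) + E s (m+1) n + (E s m (n+1) + E s m n) := by
  unfold E
  calc ∑ p ∈ range (m+1+1), ((-1:ℤ)^p * A (s+1) p (n+1)) * (((s+1).choose (m+1-p) : ℕ) : ℤ)
      = ∑ p ∈ range (m+1+1), ((-1:ℤ)^p * (A s p (n+1) + A s p n)) * (((s+1).choose (m+1-p) : ℕ) : ℤ) := by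
        refine sum_congr rfl fun p _ => by rw [A_pascal]
    _ = (∑ p ∈ range (m+1+1), ((-1:ℤ)^p * (A s p (n+1) + A s p n)) * ((s.choose (m+1-p) : ℕ) : ℤ))
        + ∑ p ∈ range (m+1), ((-1:ℤ)^p * (A s p (n+1) + A s p n)) * ((s.choose (m-p) : ℕ) : ℤ) :=
        pascal_sum s m _
    _ = _ := by
        rw [sum_congr rfl (fun p _ => (by ring :
              ((-1:ℤ)^p * (A s p (n+1) + A s p n)) * ((s.choose (m+1-p) : ℕ) : ℤ) =
              ((-1:ℤ)^p * A s p (n+1)) * ((s.choose (m+1-p) : ℕ) : ℤ) +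
                ((-1:ℤ)^p * A s p n) * ((s.choose (m+1-p) : ℕ) : ℤ))),
            sum_congr rfl (fun p _ => (by ring :
              ((-1:ℤ)^p * (A s p (n+1) + A s p n)) * ((s.choose (m-p) : ℕ) : ℤ) =
              ((-1:ℤ)^p * A s p (n+1)) * ((s.choose (m-p) : ℕ) : ℤ) +
                ((-1:ℤ)^p * A s p n) * ((s.choose (m-p) : ℕ) : ℤ))),
            sum_add_distrib, sum_add_distrib]

lemma step2 (s m n : ℕ) :
    E s (m+1) (n+1) + E s (m+1) n + E s m (n+1) = (s.choose (m+1) : ℤ) * (s.choose (n+1) : ℤ) := by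
  unfold E
  rw [← sum_add_distrib]
  have h1 : ∀ p ∈ range (m+1+1),
      ((-1:ℤ)^p * A s p (n+1)) * ((s.choose (m+1-p) : ℕ) : ℤ) +
        ((-1:ℤ)^p * A s p n) * ((s.choose (m+1-p) : ℕ) : ℤ) =
      ((-1:ℤ)^p * (A s p (n+1) + A s p n)) * ((s.choose (m+1-p) : ℕ) : ℤ) := fun p _ => by ring
  rw [sum_congr rfl h1,
    sum_range_succ' (fun p => ((-1:ℤ)^p * (A s p (n+1) + A s p n)) * ((s.choose (m+1-p) : ℕ) : ℤ))]
  have h2 : ∀ p ∈ range (m+1),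
      ((-1:ℤ)^(p+1) * (A s (p+1) (n+1) + A s (p+1) n)) * ((s.choose (m+1-(p+1)) : ℕ) : ℤ) =
      -(((-1:ℤ)^p * A s p (n+1)) * ((s.choose (m-p) : ℕ) : ℤ)) := by
    intro p _
    rw [A_step]
    have h3 : m+1-(p+1) = m - p := by omega
    rw [h3, pow_succ]
    ring
  rw [sum_congr rfl h2, sum_neg_distrib, A_zero_succ]
  simp only [Nat.sub_zero, pow_zero, one_mul]
  ring

lemma key_s8 (s m n : ℕ) :
    E (s+1) (m+1) (n+1) = (s.choose (m+1) : ℤ) * (s.choose (n+1) : ℤ) + E s m n := by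
  rw [E_pascal]
  have := step2 s m n
  linarith

lemma A_zero (s n : ℕ) : A (s+1) 0 n = (s.choose n : ℤ) := by
  induction n with
  | zero => simp [A]
  | succ n ih =>
      have h := A_zero_succ (s+1) n
      rw [ih] at h
      have h2 : (s+1).choose (n+1) = s.choose n + s.choose (n+1) := Nat.choose_succ_succ s n
      rw [h2] at h
      push_cast at h
      linarith

lemma E_zero_left (s n : ℕ) : E (s+1) 0 n = (s.choose n : ℤ) := by
  simp [E, A_zero]

lemma E_zero_right (s m : ℕ) : E (s+1) m 0 = (s.choose m : ℤ) := by
  have h1 : E (s+1) m 0 = A (s+1) 0 m := by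
    unfold E A
    refine sum_congr rfl fun p hp => ?_
    simp [A, Nat.choose_self]
  rw [h1, A_zero]

lemma Icc_reflect (m : ℕ) (f : ℕ → ℤ) :
    ∑ i ∈ Icc 1 (m+1), f i = ∑ p ∈ range (m+1), f (m+1-p) := by
  rw [← Finset.Ico_add_one_right_eq_Icc, sum_Ico_eq_sum_range]
  simp only [show m + 1 + 1 - 1 = m + 1 from rfl]
  rw [← Finset.sum_range_reflect (fun i => f (1+i)) (m+1)]
  refine sum_congr rfl fun p hp => ?_
  have := mem_range.mp hp
  congr 1
  omega

lemma cE (t m n : ℕ) : c t (m+1) (n+1) = (-1:ℤ)^(m+n+1) * E (t-1) m n := by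
  unfold c E A
  simp only [Finset.mul_sum, Finset.sum_mul]
  rw [Icc_reflect m]
  refine sum_congr rfl fun p hp => ?_
  have hpm : p ≤ m := Nat.lt_succ_iff.mp (mem_range.mp hp)
  rw [Icc_reflect n]
  refine sum_congr rfl fun q hq => ?_
  have hqn : q ≤ n := Nat.lt_succ_iff.mp (mem_range.mp hq)
  have e1 : m + 1 - (m+1-p) = p := by omega
  have e2 : n + 1 - (n+1-q) = q := by omega
  have e3 : (m+1-p) - 1 = m - p := by omega
  have e4 : (n+1-q) - 1 = n - q := by omega
  rw [e1, e2, e3, e4]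
  have hs : ((-1:ℤ))^((m+1-p) + (n+1-q) + 1) = (-1:ℤ)^(m+n+1+p+q) := by
    apply sign_eq
    omega
  rw [hs, show m+n+1+p+q = (m+n+1)+p+q from rfl, pow_add, pow_add]
  ring

theorem stmt8 (t a b : ℕ) (ht : 2 ≤ t) (ha : 1 ≤ a) (hb : 1 ≤ b) :
    c t a b =
      (-1 : ℤ) ^ (a + b + 1) * Nat.choose (t - 2) (a - 1) * Nat.choose (t - 2) (b - 1) +
        c (t - 1) (a - 1) (b - 1) := by
  obtain ⟨s, rfl⟩ : ∃ s, t = s + 2 := ⟨t - 2, by omega⟩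
  obtain ⟨m, rfl⟩ : ∃ m, a = m + 1 := ⟨a - 1, by omega⟩
  obtain ⟨n, rfl⟩ : ∃ n, b = n + 1 := ⟨b - 1, by omega⟩
  simp only [show s + 2 - 1 = s + 1 from rfl, show s + 2 - 2 = s from rfl,
    Nat.add_sub_cancel]
  rw [cE]
  simp only [show s + 2 - 1 = s + 1 from rfl]
  match m, n with
  | 0, n =>
      rw [E_zero_left]
      have hc0 : c (s+1) 0 n = 0 := by simp [c]
      rw [hc0]
      rw [sign_eq (show (0+n+1) % 2 = (0+1+(n+1)+1) % 2 by omega)]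
      simp
  | Nat.succ k, 0 =>
      rw [E_zero_right]
      have hc0 : c (s+1) (k+1) 0 = 0 := by simp [c]
      rw [hc0]
      rw [sign_eq (show (k+1+0+1) % 2 = (k+1+1+(0+1)+1) % 2 by omega)]
      simp
  | Nat.succ k, Nat.succ l =>
      simp only [Nat.succ_eq_add_one]
      rw [key_s8, cE]
      simp only [show s + 1 - 1 = s from rfl, Nat.add_sub_cancel]
      rw [sign_eq (show (k+1+(l+1)+1) % 2 = (k+1+1+(l+1+1)+1) % 2 by omega),
          sign_eq (show (k+l+1) % 2 = (k+1+1+(l+1+1)+1) % 2 by omega)]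
      ring
end

section
/- Fix natural numbers m, n with 0 < m < n, and natural numbers t ≥ 1, and let a, b be integers with a ≥ 0 or b ≥ 0. Then ∑_{i=1}^{a} ∑_{j=1}^{b} (-1)^{n-i-j-1} · C(a-i+b-j, a-i) · C(t-1, m-i) · C(t-1, n-m-j) = ∑_{k=1}^{a-m+t} ∑_{l=1}^{b-n+m+t} (-1)^{k+l+1} · C((a-m+t)-k+(b-n+m+t)-l, (a-m+t)-k) · C(t-1, k-1) · C(t-1, l-1), where sums with empty ranges are 0. -/
lemma C_cast (p q : ℕ) : C (p : ℤ) (q : ℤ) = (p.choose q : ℤ) := by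
  simp [C]

lemma C_zero_of_lt {n k : ℤ} (h : n < k) : C n k = 0 := by
  unfold C
  split
  · next h' =>
    norm_cast
    exact Nat.choose_eq_zero_of_lt (by omega)
  · rfl

theorem stmt10 (m n t a b : ℕ) (hm : 0 < m) (hmn : m < n) (ht : 1 ≤ t)
    (ha : a ≤ m) (hb : b ≤ n - m) (htm : t ≤ m) (htnm : t ≤ n - m) :
    (∑ i ∈ Finset.Icc 1 a, ∑ j ∈ Finset.Icc 1 b,
        (-1 : ℤ) ^ (n + i + j + 1) * C ((a : ℤ) - i + b - j) ((a : ℤ) - i) *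
          C ((t : ℤ) - 1) ((m : ℤ) - i) * C ((t : ℤ) - 1) ((n : ℤ) - m - j)) =
      ∑ k ∈ Finset.Icc 1 (a + t - m), ∑ l ∈ Finset.Icc 1 (b + m + t - n),
        (-1 : ℤ) ^ (k + l + 1) *
          C (((a : ℤ) - m + t) - k + ((b : ℤ) - n + m + t) - l) (((a : ℤ) - m + t) - k) *
          C ((t : ℤ) - 1) ((k : ℤ) - 1) * C ((t : ℤ) - 1) ((l : ℤ) - 1) := by
  set u := m - t with hu
  set v := n - m - t with hv
  rw [← Finset.sum_product', ← Finset.sum_product']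
  have hsub : Finset.Icc (u+1) a ×ˢ Finset.Icc (v+1) b ⊆
      Finset.Icc 1 a ×ˢ Finset.Icc 1 b := by
    intro p hp
    simp only [Finset.mem_product, Finset.mem_Icc] at *
    omega
  rw [← Finset.sum_subset hsub (by
    intro p hp hnp
    simp only [Finset.mem_product, Finset.mem_Icc] at hp hnp
    rcases (by omega : p.1 ≤ u ∨ p.2 ≤ v) with h | h
    · have hz : C ((t:ℤ)-1) ((m:ℤ)-p.1) = 0 := C_zero_of_lt (by omega)
      rw [hz]; ring
    · have hz : C ((t:ℤ)-1) ((n:ℤ)-m-p.2) = 0 := C_zero_of_lt (by omega)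
      rw [hz]; ring)]
  refine Finset.sum_nbij' (fun p => (p.1 - u, p.2 - v)) (fun p => (p.1 + u, p.2 + v))
    ?_ ?_ ?_ ?_ ?_
  · intro p hp
    simp only [Finset.mem_product, Finset.mem_Icc] at *
    omega
  · intro p hp
    simp only [Finset.mem_product, Finset.mem_Icc] at *
    omega
  · intro p hp
    simp only [Finset.mem_product, Finset.mem_Icc] at hp
    ext <;> simp <;> omega
  · intro p hp
    simp only [Finset.mem_product, Finset.mem_Icc] at hp
    ext <;> simp <;> omega
  · intro p hp
    simp only [Finset.mem_product, Finset.mem_Icc] at hp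
    obtain ⟨⟨hi1, hi2⟩, hj1, hj2⟩ := hp
    have hsign : (-1 : ℤ) ^ (n + p.1 + p.2 + 1) = (-1) ^ ((p.1 - u) + (p.2 - v) + 1) := by
      rw [show n + p.1 + p.2 + 1 = ((p.1 - u) + (p.2 - v) + 1) + 2 * (u + v + t) by omega,
        pow_add, pow_mul]
      simp
    have e1 : ((a:ℤ) - m + t) - ((p.1 - u : ℕ):ℤ) + ((b:ℤ) - n + m + t) - ((p.2 - v : ℕ):ℤ)
        = (a:ℤ) - p.1 + b - p.2 := by omega
    have e2 : ((a:ℤ) - m + t) - ((p.1 - u : ℕ):ℤ) = (a:ℤ) - p.1 := by omega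
    have e3 : C ((t:ℤ)-1) ((m:ℤ)-p.1) = C ((t:ℤ)-1) (((p.1 - u : ℕ):ℤ) - 1) := by
      rw [show ((t:ℤ)-1) = ((t-1 : ℕ):ℤ) by omega,
        show ((m:ℤ)-p.1) = ((t - (p.1 - u) : ℕ):ℤ) by omega,
        show (((p.1 - u : ℕ):ℤ) - 1) = (((p.1 - u) - 1 : ℕ):ℤ) by omega,
        C_cast, C_cast,
        show t - (p.1 - u) = (t-1) - ((p.1 - u) - 1) by omega,
        Nat.choose_symm (by omega)]
    have e4 : C ((t:ℤ)-1) ((n:ℤ)-m-p.2) = C ((t:ℤ)-1) (((p.2 - v : ℕ):ℤ) - 1) := by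
      rw [show ((t:ℤ)-1) = ((t-1 : ℕ):ℤ) by omega,
        show ((n:ℤ)-m-p.2) = ((t - (p.2 - v) : ℕ):ℤ) by omega,
        show (((p.2 - v : ℕ):ℤ) - 1) = (((p.2 - v) - 1 : ℕ):ℤ) by omega,
        C_cast, C_cast,
        show t - (p.2 - v) = (t-1) - ((p.2 - v) - 1) by omega,
        Nat.choose_symm (by omega)]
    rw [hsign, e3, e4, ← e1, ← e2]
end
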